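/- Let f∈𝒦⁻ and write f² for the function n↦f(n)². Then for every φ∈ℓ²_fin(ℕ) one has φ∈D(f(N)T_{f²})∩D(T_{f²}f(N))∩D(T_f) and (f(N)T_{f²} + T_{f²}f(N))φ = T_fφ. -/

import Mathlib

open Filter Topology
open scoped ENNReal

noncomputable section

abbrev l2 : Type := lp (fun _ : ℕ => ℂ) 2

def xi (n : ℕ) : l2 := lp.single 2 n 1

def FinSupp (φ : l2) : Prop := (Function.support (⇑φ : ℕ → ℂ)).Finite

/-- The class 𝒦. -/
def MemK (f : ℕ → ℝ) : Prop := 0 < f 0 ∧ ∀ n, f n < f (n + 1)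

/-- The class 𝒦⁻. -/
def MemKminus (f : ℕ → ℝ) : Prop := MemK f ∧ Summable (fun n => 1 / (f n) ^ 2)

def fsq (f : ℕ → ℝ) : ℕ → ℝ := fun n => (f n) ^ 2

/-- the sequence of the multiplication operator `f(N)` applied to φ -/
def mulSeq (f : ℕ → ℝ) (φ : ℕ → ℂ) : ℕ → ℂ := fun n => ((f n : ℝ) : ℂ) * φ n

/-- the sequence of `f(N)^p` applied to φ -/
def powSeq (f : ℕ → ℝ) (p : ℕ) (φ : ℕ → ℂ) : ℕ → ℂ := fun n => (((f n) ^ p : ℝ) : ℂ) * φ n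

/-- coordinates of `T_{f,m} φ`. -/
def TfmSeq (f : ℕ → ℝ) (m : ℕ) (φ : ℕ → ℂ) : ℕ → ℂ := fun n =>
  Complex.I * ∑ k ∈ Finset.Icc 1 m,
    ((if k ≤ n then φ (n - k) / ((f n - f (n - k) : ℝ) : ℂ) else 0)
      - φ (n + k) / ((f (n + k) - f n : ℝ) : ℂ))

/-- `(φ, ψ)` is in the graph of `T_f`. -/
def InGraphTf (f : ℕ → ℝ) (φ ψ : l2) : Prop :=
  ∃ h : ∀ m, Memℓp (TfmSeq f m (⇑φ)) 2,
    Tendsto (fun m => (⟨TfmSeq f m (⇑φ), h m⟩ : l2)) atTop (𝓝 ψ)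


namespace Stmt7Aux

def Fc (g : ℕ → ℝ) (φ : ℕ → ℂ) (n j : ℕ) : ℂ := φ j / ((g n - g j : ℝ) : ℂ)

def limCoord (g : ℕ → ℝ) (φ : ℕ → ℂ) (M : ℕ) (n : ℕ) : ℂ :=
  Complex.I * ∑ j ∈ Finset.range (M + 1), Fc g φ n j

lemma tfm_supp (g : ℕ → ℝ) (φ : ℕ → ℂ) (M : ℕ) (hM : ∀ j, M < j → φ j = 0)
    (m n : ℕ) (hn : m + M < n) : TfmSeq g m φ n = 0 := by
  unfold TfmSeq
  rw [Finset.sum_eq_zero, mul_zero]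
  intro k hk
  rw [Finset.mem_Icc] at hk
  rw [hM (n + k) (by omega)]
  by_cases h : k ≤ n
  · rw [if_pos h, hM (n - k) (by omega)]
    simp
  · rw [if_neg h]; simp

lemma memℓp_of_bddsupp (ψ : ℕ → ℂ) (N : ℕ) (h : ∀ n, N < n → ψ n = 0) :
    Memℓp ψ 2 := by
  apply memℓp_gen
  apply summable_of_ne_finset_zero (s := Finset.range (N + 1))
  intro n hn
  rw [Finset.mem_range, not_lt] at hn
  rw [h n (by omega), norm_zero]
  rw [Real.zero_rpow (by norm_num)]

lemma memℓp_of_bound (ψ : ℕ → ℂ) (b : ℕ → ℝ) (hs : Summable (fun n => b n ^ 2)) (N : ℕ)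
    (hb : ∀ n, N ≤ n → ‖ψ n‖ ≤ b n) : Memℓp ψ 2 := by
  apply memℓp_gen
  have h2 : ((2 : ℝ≥0∞)).toReal = ((2 : ℕ) : ℝ) := by norm_num
  have key : Summable (fun n => ‖ψ n‖ ^ (2 : ℕ)) := by
    rw [← summable_nat_add_iff N]
    refine Summable.of_nonneg_of_le (fun n => by positivity) (fun n => ?_)
      ((summable_nat_add_iff N).mpr hs)
    have h1 := hb (n + N) (Nat.le_add_left _ _)
    have h0 : (0 : ℝ) ≤ ‖ψ (n + N)‖ := norm_nonneg _
    nlinarith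
  have he : (fun n => ‖ψ n‖ ^ ((2 : ℝ≥0∞)).toReal) = fun n => ‖ψ n‖ ^ (2 : ℕ) := by
    funext n; rw [h2, Real.rpow_natCast]
  rw [he]; exact key

lemma tfm_eq (g : ℕ → ℝ) (φ : ℕ → ℂ) (M : ℕ) (hM : ∀ j, M < j → φ j = 0)
    (m n : ℕ) (hm : M ≤ m) :
    TfmSeq g m φ n = limCoord g φ M n
      - Complex.I * ∑ j ∈ Finset.range (n - m), Fc g φ n j := by
  have hFn : Fc g φ n n = 0 := by simp [Fc]
  have hFz : ∀ j, M < j → Fc g φ n j = 0 := fun j hj => by simp [Fc, hM j hj]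
  have hback : ∑ k ∈ Finset.Icc 1 m,
      (if k ≤ n then φ (n - k) / ((g n - g (n - k) : ℝ) : ℂ) else 0)
      = ∑ j ∈ Finset.Ico (n - m) n, Fc g φ n j := by
    rw [← Finset.sum_filter]
    refine Finset.sum_nbij' (fun k => n - k) (fun j => n - j) ?_ ?_ ?_ ?_ ?_
    · intro a ha
      simp only [Finset.mem_filter, Finset.mem_Icc, Finset.mem_Ico] at *
      omega
    · intro a ha
      simp only [Finset.mem_filter, Finset.mem_Icc, Finset.mem_Ico] at *
      omega
    · intro a ha
      simp only [Finset.mem_filter, Finset.mem_Icc] at ha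
      show n - (n - a) = a
      omega
    · intro a ha
      simp only [Finset.mem_Ico] at ha
      show n - (n - a) = a
      omega
    · intro a ha
      rfl
  have hfwd : ∑ k ∈ Finset.Icc 1 m, φ (n + k) / ((g (n + k) - g n : ℝ) : ℂ)
      = ∑ j ∈ Finset.Ico (n + 1) (n + m + 1), (- Fc g φ n j) := by
    refine Finset.sum_nbij' (fun k => n + k) (fun j => j - n) ?_ ?_ ?_ ?_ ?_
    · intro a ha
      simp only [Finset.mem_Icc, Finset.mem_Ico] at *
      omega
    · intro a ha
      simp only [Finset.mem_Icc, Finset.mem_Ico] at *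
      omega
    · intro a _
      show n + a - n = a
      omega
    · intro a ha
      simp only [Finset.mem_Ico] at ha
      show n + (a - n) = a
      omega
    · intro a ha
      have hc : ((g (n + a) - g n : ℝ) : ℂ) = -((g n - g (n + a) : ℝ) : ℂ) := by
        push_cast; ring
      rw [hc, div_neg]
      rfl
  have hs1 : ∑ j ∈ Finset.Ico (n - m) n, Fc g φ n j
      = ∑ j ∈ Finset.range n, Fc g φ n j - ∑ j ∈ Finset.range (n - m), Fc g φ n j :=
    Finset.sum_Ico_eq_sub _ (Nat.sub_le n m)
  have hs2 : ∑ j ∈ Finset.range n, Fc g φ n j + ∑ j ∈ Finset.Ico (n + 1) (n + m + 1), Fc g φ n j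
      = ∑ j ∈ Finset.range (M + 1), Fc g φ n j := by
    have e1 : ∑ j ∈ Finset.range (n + 1), Fc g φ n j = ∑ j ∈ Finset.range n, Fc g φ n j := by
      rw [Finset.sum_range_succ, hFn, add_zero]
    have e2 : ∑ j ∈ Finset.range (n + 1), Fc g φ n j
        + ∑ j ∈ Finset.Ico (n + 1) (n + m + 1), Fc g φ n j
        = ∑ j ∈ Finset.range (n + m + 1), Fc g φ n j := by
      rw [Finset.range_eq_Ico, Finset.range_eq_Ico]
      exact Finset.sum_Ico_consecutive _ (by omega) (by omega)
    rw [← e1, e2]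
    refine (Finset.sum_subset (Finset.range_subset_range.mpr (by omega)) ?_).symm
    intro j _ hj
    rw [Finset.mem_range, not_lt] at hj
    exact hFz j (by omega)
  unfold TfmSeq limCoord
  rw [Finset.sum_sub_distrib, hback, hfwd, Finset.sum_neg_distrib, hs1, ← hs2]
  ring


lemma main (g : ℕ → ℝ) (hg : MemKminus g) (φ : l2) (M : ℕ)
    (hM : ∀ j, M < j → ⇑φ j = 0) :
    ∃ (ψ : l2) (N : ℕ),
      (∀ n, ⇑ψ n = limCoord g (⇑φ) M n) ∧
      (∀ n, N ≤ n → ‖limCoord g (⇑φ) M n‖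
          ≤ 2 * (∑ j ∈ Finset.range (M + 1), ‖⇑φ j‖) / g n) ∧
      InGraphTf g φ ψ := by
  obtain ⟨⟨h0, hlt⟩, hsum⟩ := hg
  have hmono : StrictMono g := strictMono_nat_of_lt_succ hlt
  have hpos : ∀ n, 0 < g n := fun n => lt_of_lt_of_le h0 (hmono.monotone (Nat.zero_le n))
  -- g tends to infinity
  have hlarge : ∀ c : ℝ, ∃ N, ∀ n, N ≤ n → c ≤ g n := by
    intro c
    have ht : Tendsto (fun n => 1 / g n ^ 2) atTop (𝓝 0) := hsum.tendsto_atTop_zero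
    have hc : (0 : ℝ) < 1 / (max c 1) ^ 2 := by positivity
    obtain ⟨N, hN⟩ := eventually_atTop.mp (ht.eventually (gt_mem_nhds hc))
    refine ⟨N, fun n hn => ?_⟩
    have h1 := hN n hn
    rw [div_lt_div_iff₀ (pow_pos (hpos n) 2) (by positivity)] at h1
    have h2 := hpos n
    have h3 : (0 : ℝ) < max c 1 := lt_of_lt_of_le one_pos (le_max_right _ _)
    have h4 : c ≤ max c 1 := le_max_left _ _
    nlinarith
  set C := ∑ j ∈ Finset.range (M + 1), ‖⇑φ j‖ with hCdef
  have hC0 : 0 ≤ C := Finset.sum_nonneg fun j _ => norm_nonneg _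
  have hCK : ∀ K, ∑ j ∈ Finset.range K, ‖⇑φ j‖ ≤ C := by
    intro K
    calc ∑ j ∈ Finset.range K, ‖⇑φ j‖
        ≤ ∑ j ∈ Finset.range (max K (M + 1)), ‖⇑φ j‖ :=
          Finset.sum_le_sum_of_subset_of_nonneg
            (Finset.range_subset_range.mpr (le_max_left _ _)) (fun j _ _ => norm_nonneg _)
      _ = C := by
          refine (Finset.sum_subset (Finset.range_subset_range.mpr (le_max_right _ _)) ?_).symm
          intro j _ hj
          rw [Finset.mem_range, not_lt] at hj
          rw [hM j (by omega), norm_zero]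
  obtain ⟨N₁, hN₁⟩ := hlarge (2 * g M)
  set N₀ := max N₁ (M + 1) with hN₀def
  have hMN₀ : M < N₀ := lt_of_lt_of_le (Nat.lt_succ_self M) (le_max_right _ _)
  have hgN₀ : ∀ n, N₀ ≤ n → 2 * g M ≤ g n := fun n hn => hN₁ n (le_trans (le_max_left _ _) hn)
  -- termwise bound
  have hFb : ∀ n j, N₀ ≤ n → (j ≤ M ∨ ⇑φ j = 0) →
      ‖Fc g (⇑φ) n j‖ ≤ 2 * ‖⇑φ j‖ / g n := by
    intro n j hn hj
    rcases hj with hj | hj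
    · rw [Fc, norm_div, Complex.norm_real, Real.norm_eq_abs]
      have h1 : g j ≤ g M := hmono.monotone hj
      have h2 : 2 * g M ≤ g n := hgN₀ n hn
      have h3 : 0 < g n := hpos n
      have h4 : 0 < g M := hpos M
      have h5 : 0 < g n - g j := by nlinarith
      rw [abs_of_pos h5, div_le_div_iff₀ h5 h3]
      nlinarith [norm_nonneg (⇑φ j)]
    · rw [Fc, hj]
      simp
  -- sum bound
  have hSum : ∀ n K, N₀ ≤ n → ‖∑ j ∈ Finset.range K, Fc g (⇑φ) n j‖ ≤ 2 * C / g n := by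
    intro n K hn
    calc ‖∑ j ∈ Finset.range K, Fc g (⇑φ) n j‖
        ≤ ∑ j ∈ Finset.range K, ‖Fc g (⇑φ) n j‖ := norm_sum_le _ _
      _ ≤ ∑ j ∈ Finset.range K, 2 * ‖⇑φ j‖ / g n := by
          refine Finset.sum_le_sum fun j _ => hFb n j hn ?_
          by_cases h : j ≤ M
          · exact Or.inl h
          · exact Or.inr (hM j (by omega))
      _ = (∑ j ∈ Finset.range K, ‖⇑φ j‖) * (2 / g n) := by
          rw [Finset.sum_mul]
          exact Finset.sum_congr rfl fun j _ => by ring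
      _ ≤ C * (2 / g n) :=
          mul_le_mul_of_nonneg_right (hCK K) (div_nonneg (by norm_num) (hpos n).le)
      _ = 2 * C / g n := by ring
  have hψb : ∀ n, N₀ ≤ n → ‖limCoord g (⇑φ) M n‖ ≤ 2 * C / g n := by
    intro n hn
    rw [limCoord, norm_mul, Complex.norm_I, one_mul]
    exact hSum n (M + 1) hn
  set q : ℕ → ℝ := fun n => (2 * C / g n) ^ 2 with hq
  have hqsum : Summable q :=
    (hsum.mul_left (4 * C ^ 2)).congr fun n => by
      have := (hpos n).ne'
      rw [hq]; field_simp; ring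
  have hψmem : Memℓp (limCoord g (⇑φ) M) 2 :=
    memℓp_of_bound _ (fun n => 2 * C / g n) hqsum N₀ hψb
  have hmem : ∀ m, Memℓp (TfmSeq g m (⇑φ)) 2 := fun m =>
    memℓp_of_bddsupp _ (m + M) (fun n hn => tfm_supp g (⇑φ) M hM m n hn)
  refine ⟨⟨limCoord g (⇑φ) M, hψmem⟩, N₀, fun n => rfl, hψb, hmem, ?_⟩
  rw [tendsto_iff_norm_sub_tendsto_zero]
  have htail : Tendsto (fun m : ℕ => ∑' k, q (k + (m + 1))) atTop (𝓝 0) :=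
    (tendsto_sum_nat_add q).comp (tendsto_add_atTop_nat 1)
  have hsqrt : Tendsto (fun m : ℕ => Real.sqrt (∑' k, q (k + (m + 1)))) atTop (𝓝 0) := by
    simpa using htail.sqrt
  refine squeeze_zero' (Eventually.of_forall fun m => norm_nonneg _) ?_ hsqrt
  rw [eventually_atTop]
  refine ⟨N₀, fun m hm => ?_⟩
  set d : l2 := (⟨TfmSeq g m (⇑φ), hmem m⟩ : l2) - ⟨limCoord g (⇑φ) M, hψmem⟩ with hd
  have hdco : ∀ n, ⇑d n = TfmSeq g m (⇑φ) n - limCoord g (⇑φ) M n := by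
    intro n
    rw [hd, lp.coeFn_sub]
    rfl
  have hdn : ∀ n, ‖⇑d n‖ ^ (2 : ℕ) ≤ (if m + 1 ≤ n then q n else 0) := by
    intro n
    rw [hdco n, tfm_eq g (⇑φ) M hM m n (by omega)]
    by_cases hn : n ≤ m
    · rw [show n - m = 0 by omega, if_neg (by omega : ¬ m + 1 ≤ n)]
      simp
    · rw [if_pos (by omega)]
      have h1 : limCoord g (⇑φ) M n
          - Complex.I * ∑ j ∈ Finset.range (n - m), Fc g (⇑φ) n j
          - limCoord g (⇑φ) M n
          = -(Complex.I * ∑ j ∈ Finset.range (n - m), Fc g (⇑φ) n j) := by ring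
      rw [h1, norm_neg, norm_mul, Complex.norm_I, one_mul]
      exact pow_le_pow_left₀ (norm_nonneg _) (hSum n (n - m) (by omega)) 2
  -- summability facts
  set r : ℕ → ℝ := fun n => if m + 1 ≤ n then q n else 0 with hr
  have hrsum : Summable r := by
    refine Summable.of_nonneg_of_le (fun n => ?_) (fun n => ?_) hqsum
    · rw [hr]; dsimp only; split <;> [exact sq_nonneg _; exact le_refl 0]
    · rw [hr]; dsimp only; split <;> [exact le_refl _; exact sq_nonneg _]
  have h2r : ((2 : ℝ≥0∞)).toReal = ((2 : ℕ) : ℝ) := by norm_num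
  have hsd : Summable (fun n => ‖⇑d n‖ ^ (2 : ℕ)) := by
    have := (lp.memℓp d).summable (by norm_num : 0 < (2 : ℝ≥0∞).toReal)
    simpa only [h2r, Real.rpow_natCast] using this
  have hsq : ‖d‖ ^ (2 : ℕ) ≤ ∑' k, q (k + (m + 1)) := by
    have hnorm := lp.norm_rpow_eq_tsum (p := 2) (by norm_num) d
    simp only [h2r, Real.rpow_natCast] at hnorm
    rw [hnorm]
    calc ∑' n, ‖⇑d n‖ ^ (2 : ℕ)
        ≤ ∑' n, r n := Summable.tsum_le_tsum hdn hsd hrsum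
      _ = ∑' k, q (k + (m + 1)) := by
          have e := Summable.sum_add_tsum_nat_add (f := r) (m + 1) hrsum
          have e0 : ∑ i ∈ Finset.range (m + 1), r i = 0 :=
            Finset.sum_eq_zero fun i hi =>
              if_neg (by rw [Finset.mem_range] at hi; omega)
          rw [e0, zero_add] at e
          rw [← e]
          exact tsum_congr fun i => if_pos (by omega)
  exact Real.le_sqrt_of_sq_le hsq

end Stmt7Aux

/-- Let `f ∈ 𝒦⁻` and `f²(n) = f n ^ 2`. Then every finitely supported `φ`
lies in `D(f(N) T_{f²}) ∩ D(T_{f²} f(N)) ∩ D(T_f)` and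
`(f(N) T_{f²} + T_{f²} f(N)) φ = T_f φ`. -/

theorem stmt7 (f : ℕ → ℝ) (hf : MemKminus f) (φ : l2) (hφ : FinSupp φ) :
    ∃ (T2φ T2Fφ Tφ : l2) (hF : Memℓp (mulSeq f ⇑φ) 2) (hFT : Memℓp (mulSeq f ⇑T2φ) 2),
      InGraphTf (fsq f) φ T2φ ∧
      InGraphTf (fsq f) (⟨mulSeq f ⇑φ, hF⟩ : l2) T2Fφ ∧
      InGraphTf f φ Tφ ∧
      (⟨mulSeq f ⇑T2φ, hFT⟩ : l2) + T2Fφ = Tφ := by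
  have hmono : StrictMono f := strictMono_nat_of_lt_succ hf.1.2
  have hpos : ∀ n, 0 < f n := fun n => lt_of_lt_of_le hf.1.1 (hmono.monotone (Nat.zero_le n))
  -- support bound
  obtain ⟨M, hMbd⟩ : ∃ M, ∀ j, M < j → ⇑φ j = 0 := by
    obtain ⟨M, hM⟩ := hφ.bddAbove
    refine ⟨M, fun j hj => ?_⟩
    by_contra h
    have : j ≤ M := hM (Function.mem_support.mpr h)
    omega
  have hf2 : MemKminus (fsq f) := by
    refine ⟨⟨pow_pos hf.1.1 2, fun n => ?_⟩, ?_⟩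
    · exact pow_lt_pow_left₀ (hf.1.2 n) (hpos n).le (by norm_num)
    · refine Summable.of_nonneg_of_le (fun n => by positivity) (fun n => ?_)
        (hf.2.mul_left (1 / f 0 ^ 2))
      have e : 1 / (fsq f n) ^ 2 = (1 / f n ^ 2) * (1 / f n ^ 2) := by
        simp only [fsq]; ring
      rw [e]
      exact mul_le_mul_of_nonneg_right
        (one_div_le_one_div_of_le (pow_pos (hpos 0) 2)
          (pow_le_pow_left₀ (hpos 0).le (hmono.monotone (Nat.zero_le n)) 2))
        (by positivity)
  have hF : Memℓp (mulSeq f ⇑φ) 2 :=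
    Stmt7Aux.memℓp_of_bddsupp _ M (fun n hn => by simp [mulSeq, hMbd n hn])
  obtain ⟨Tφ, N1, hTco, hTb, hTgraph⟩ := Stmt7Aux.main f hf φ M hMbd
  obtain ⟨T2φ, N2, h2co, h2b, h2graph⟩ := Stmt7Aux.main (fsq f) hf2 φ M hMbd
  have hM' : ∀ j, M < j → (⇑(⟨mulSeq f ⇑φ, hF⟩ : l2)) j = 0 := fun j hj => by
    show mulSeq f (⇑φ) j = 0
    simp [mulSeq, hMbd j hj]
  obtain ⟨T2Fφ, N3, h3co, h3b, h3graph⟩ :=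
    Stmt7Aux.main (fsq f) hf2 (⟨mulSeq f ⇑φ, hF⟩ : l2) M hM'
  set C := ∑ j ∈ Finset.range (M + 1), ‖⇑φ j‖ with hC
  have hFT : Memℓp (mulSeq f ⇑T2φ) 2 := by
    refine Stmt7Aux.memℓp_of_bound _ (fun n => 2 * C / f n) ?_ N2 ?_
    · exact (hf.2.mul_left (4 * C ^ 2)).congr fun n => by
        have := (hpos n).ne'
        field_simp
        ring
    · intro n hn
      have hb := h2b n hn
      calc ‖mulSeq f (⇑T2φ) n‖ = |f n| * ‖⇑T2φ n‖ := by
            rw [mulSeq, norm_mul, Complex.norm_real, Real.norm_eq_abs]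
        _ ≤ f n * (2 * C / fsq f n) := by
            rw [abs_of_pos (hpos n), h2co n]
            exact mul_le_mul_of_nonneg_left hb (hpos n).le
        _ = 2 * C / f n := by
            simp only [fsq]
            have := (hpos n).ne'
            field_simp
  refine ⟨T2φ, T2Fφ, Tφ, hF, hFT, h2graph, h3graph, hTgraph, ?_⟩
  -- the coordinatewise identity
  have key : ∀ n, (↑(f n) : ℂ) * Stmt7Aux.limCoord (fsq f) (⇑φ) M n
      + Stmt7Aux.limCoord (fsq f) (mulSeq f (⇑φ)) M n
      = Stmt7Aux.limCoord f (⇑φ) M n := by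
    intro n
    simp only [Stmt7Aux.limCoord]
    have e1 : (↑(f n) : ℂ) * (Complex.I * ∑ j ∈ Finset.range (M + 1), Stmt7Aux.Fc (fsq f) (⇑φ) n j)
        + Complex.I * ∑ j ∈ Finset.range (M + 1), Stmt7Aux.Fc (fsq f) (mulSeq f ⇑φ) n j
        = Complex.I * ∑ j ∈ Finset.range (M + 1),
            ((↑(f n) : ℂ) * Stmt7Aux.Fc (fsq f) (⇑φ) n j
              + Stmt7Aux.Fc (fsq f) (mulSeq f ⇑φ) n j) := by
      rw [Finset.sum_add_distrib, ← Finset.mul_sum]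
      ring
    rw [e1]
    congr 1
    refine Finset.sum_congr rfl fun j _ => ?_
    simp only [Stmt7Aux.Fc, mulSeq, fsq]
    by_cases hj : j = n
    · subst hj
      simp
    · have hne : f j ≠ f n := fun h => hj (hmono.injective h)
      have h1 : ((f n : ℂ)) - (f j : ℂ) ≠ 0 := by
        intro h
        exact hne ((by exact_mod_cast sub_eq_zero.mp h : f n = f j)).symm
      have h2 : ((f n : ℂ)) + (f j : ℂ) ≠ 0 := by
        have h2' : ((f n + f j : ℝ) : ℂ) ≠ 0 := by
          exact_mod_cast (add_pos (hpos n) (hpos j)).ne'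
        push_cast at h2'
        exact h2'
      have h3 : ((f n : ℂ)) ^ 2 - (f j : ℂ) ^ 2 ≠ 0 := by
        rw [sq_sub_sq]
        exact mul_ne_zero h2 h1
      push_cast
      field_simp
      ring
  apply lp.ext
  funext n
  have hadd : (⇑((⟨mulSeq f ⇑T2φ, hFT⟩ : l2) + T2Fφ) : ℕ → ℂ) n
      = mulSeq f (⇑T2φ) n + ⇑T2Fφ n := by
    rw [lp.coeFn_add]
    rfl
  show (⇑((⟨mulSeq f ⇑T2φ, hFT⟩ : l2) + T2Fφ) : ℕ → ℂ) n = ⇑Tφ n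
  rw [hadd, hTco n, h3co n]
  have hm : mulSeq f (⇑T2φ) n = (↑(f n) : ℂ) * Stmt7Aux.limCoord (fsq f) (⇑φ) M n := by
    rw [mulSeq, h2co n]
  rw [hm]
  exact key n
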